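/- Let f : ℝ^d → ℝ be L-smooth and twice continuously differentiable and let X ⊆ ℝ^d have Lebesgue measure zero. If gradient descent with step size γ ≤ 1/(2L) is initialized uniformly at random in a set W with ℒ(W) > 0, then almost surely no iterate x_t (t ≥ 0) lies in X. -/

import Mathlib

open MeasureTheory
open scoped ENNReal

open scoped NNReal

/-- Preimages of null sets under an antilipschitz map of Euclidean space are null. -/
lemma antilip_preimage_null {d : ℕ} {g : EuclideanSpace ℝ (Fin d) → EuclideanSpace ℝ (Fin d)}
    {K : ℝ≥0} (hg : AntilipschitzWith K g) {S : Set (EuclideanSpace ℝ (Fin d))}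
    (hS : volume S = 0) : volume (g ⁻¹' S) = 0 := by
  classical
  set e := (MeasurableEquiv.toLp 2 (Fin d → ℝ)).symm with he
  have hmp : MeasurePreserving e volume volume :=
    EuclideanSpace.volume_preserving_symm_measurableEquiv_toLp (Fin d)
  -- transported map on `Fin d → ℝ`
  set H : (Fin d → ℝ) → (Fin d → ℝ) := fun x => e (g (e.symm x)) with hH
  -- antilipschitz constants for e and e.symm
  have heL : LipschitzWith 1 (⇑e) := by
    show LipschitzWith 1 (@WithLp.ofLp 2 (Fin d → ℝ))
    exact PiLp.lipschitzWith_ofLp 2 _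
  have heA : AntilipschitzWith ((Fintype.card (Fin d) : ℝ≥0) ^ (1 / (2:ℝ≥0∞)).toReal) (⇑e) := by
    show AntilipschitzWith _ (@WithLp.ofLp 2 (Fin d → ℝ))
    exact PiLp.antilipschitzWith_ofLp 2 _
  have hesymmA : AntilipschitzWith 1 (⇑e.symm) := by
    refine AntilipschitzWith.of_le_mul_dist fun x y => ?_
    have := heL.dist_le_mul (e.symm x) (e.symm y)
    simpa using this
  obtain ⟨K', hHA⟩ : ∃ K', AntilipschitzWith K' H := ⟨_, heA.comp (hg.comp hesymmA)⟩
  -- null measurable superset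
  obtain ⟨S', hSS', hS'meas, hS'⟩ := exists_measurable_superset_of_null hS
  set T : Set (Fin d → ℝ) := ⇑e.symm ⁻¹' S' with hT
  have hTnull : volume T = 0 := by
    rw [(hmp.symm e).measure_preimage hS'meas.nullMeasurableSet]
    exact hS'
  have key : volume (H ⁻¹' T) = 0 := by
    have h1 : (μH[(d:ℝ)] (H ⁻¹' T) : ℝ≥0∞) ≤ (K' : ℝ≥0∞) ^ (d:ℝ) * μH[(d:ℝ)] T :=
      hHA.hausdorffMeasure_preimage_le (by positivity) T
    have hvol : (μH[(d:ℝ)] : Measure (Fin d → ℝ)) = volume := by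
      have := MeasureTheory.hausdorffMeasure_pi_real (ι := Fin d)
      simpa using this
    rw [hvol] at h1
    refine le_antisymm ?_ zero_le
    calc volume (H ⁻¹' T) ≤ _ := h1
    _ = 0 := by rw [hTnull, mul_zero]
  -- now translate back
  have hpre : H ⁻¹' T = ⇑e.symm ⁻¹' (g ⁻¹' S') := by
    ext x
    simp [hH, hT, Set.mem_preimage]
  rw [hpre] at key
  have : volume (g ⁻¹' S') = 0 := by
    have hmeq : ⇑e.symm ⁻¹' (g ⁻¹' S') = ⇑e '' (g ⁻¹' S') := by
      ext x
      constructor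
      · intro hx; exact ⟨e.symm x, hx, by simp⟩
      · rintro ⟨y, hy, rfl⟩; simpa using hy
    -- use outer measure / measure_preimage via null measurable? Use e.symm measure preserving map
    have := (hmp.symm e).measure_preimage_emb (e.symm.measurableEmbedding) (g ⁻¹' S')
    rw [this] at key
    exact key
  exact measure_mono_null (Set.preimage_mono hSS') this

/-- If `ℒ(X) = 0`, GD with `γ ≤ 1/(2L)` initialized uniformly at random in `W`
(of positive finite measure) almost surely never has an iterate in `X`. -/
theorem stmt4 {d : ℕ} (L γ : ℝ) (hL : 0 < L) (hγ : 0 < γ) (hγL : γ ≤ 1 / (2 * L))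
    (f : EuclideanSpace ℝ (Fin d) → ℝ)
    (f' : EuclideanSpace ℝ (Fin d) → EuclideanSpace ℝ (Fin d))
    (hf : ContDiff ℝ 2 f)
    (hgrad : ∀ x, HasGradientAt f (f' x) x)
    (hlip : LipschitzWith (Real.toNNReal L) f')
    (W X : Set (EuclideanSpace ℝ (Fin d))) (hW : MeasurableSet W)
    (hWpos : 0 < volume W) (hWfin : volume W < ⊤)
    (hX : volume X = 0) :
    volume {x₀ ∈ W | ∃ t : ℕ, (fun x => x - γ • f' x)^[t] x₀ ∈ X} = 0 := by
  set g : EuclideanSpace ℝ (Fin d) → EuclideanSpace ℝ (Fin d) :=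
    fun x => x - γ • f' x with hg
  have hγL' : γ * L ≤ 1 / 2 := by
    rw [le_div_iff₀ (by positivity)] at hγL
    nlinarith
  have hgA : AntilipschitzWith 2 g := by
    refine AntilipschitzWith.of_le_mul_dist fun x y => ?_
    have hlip' : dist (f' x) (f' y) ≤ L * dist x y := by
      have := hlip.dist_le_mul x y
      rwa [Real.coe_toNNReal _ hL.le] at this
    have h1 : dist (g x) (g y) ≥ dist x y - γ * dist (f' x) (f' y) := by
      rw [hg]
      simp only [dist_eq_norm]
      have : (x - γ • f' x) - (y - γ • f' y) = (x - y) - γ • (f' x - f' y) := by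
        rw [smul_sub]; abel
      rw [this]
      have h2 : ‖x - y‖ - ‖γ • (f' x - f' y)‖ ≤ ‖(x - y) - γ • (f' x - f' y)‖ :=
        norm_sub_norm_le _ _
      rw [norm_smul, Real.norm_eq_abs, abs_of_pos hγ] at h2
      linarith
    have hd : dist x y ≥ 0 := dist_nonneg
    push_cast
    nlinarith
  have hiter : ∀ t : ℕ, AntilipschitzWith (2 ^ t) (g^[t]) := by
    intro t
    induction t with
    | zero => simpa using AntilipschitzWith.id (α := EuclideanSpace ℝ (Fin d))
    | succ n ih =>
      rw [Function.iterate_succ]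
      have := ih.comp hgA
      convert this using 1
      push_cast
      ring
  have hnull : ∀ t : ℕ, volume (g^[t] ⁻¹' X) = 0 :=
    fun t => antilip_preimage_null (hiter t) hX
  refine measure_mono_null ?_ (measure_iUnion_null hnull)
  rintro x ⟨-, t, ht⟩
  exact Set.mem_iUnion.2 ⟨t, ht⟩
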